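/- Let S be an uncountable set of countable limit ordinals carrying a ladder system ⟨x_α : α ∈ S⟩. Then the Baumgartner type (S, <_lex) contains no real type: every subset T ⊆ S such that (T, <_lex) order-embeds into ℝ is countable. -/

import Mathlib

/-- The first uncountable ordinal, `ω₁`. -/
noncomputable def ω1 : Ordinal := (Cardinal.aleph 1).ord

/-- `x` is a ladder system on the set `S` of countable limit ordinals: each `α ∈ S` is a
countable limit ordinal and `x α : ℕ → Ordinal` is strictly increasing with range contained
and cofinal in `α`. -/
def IsLadderOn (S : Set Ordinal) (x : Ordinal → ℕ → Ordinal) : Prop :=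
  ∀ α ∈ S, α < ω1 ∧ Order.IsSuccLimit α ∧ StrictMono (x α) ∧ (∀ n : ℕ, x α n < α) ∧
    ∀ β < α, ∃ n : ℕ, β < x α n

/-- The lexicographic order associated to a ladder system: `α <lex β` iff at the least `n`
where `x α` and `x β` differ we have `x α n < x β n`. -/
def LexLt (x : Ordinal → ℕ → Ordinal) (α β : Ordinal) : Prop :=
  ∃ n : ℕ, (∀ m < n, x α m = x β m) ∧ x α n < x β n

/-- Any two distinct elements of `S` are `LexLt`-comparable. -/
lemma lexlt_total {S : Set Ordinal} {x : Ordinal → ℕ → Ordinal}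
    (hx : IsLadderOn S x) {α β : Ordinal} (hα : α ∈ S) (hβ : β ∈ S)
    (hne : α ≠ β) : LexLt x α β ∨ LexLt x β α := by
  classical
  have hd : ∃ n, x α n ≠ x β n := by
    by_contra h
    push_neg at h
    rcases hne.lt_or_gt with hlt | hlt
    · obtain ⟨n, hn⟩ := (hx β hβ).2.2.2.2 α hlt
      have h1 : x β n < α := by rw [← h n]; exact (hx α hα).2.2.2.1 n
      exact absurd hn (not_lt.2 h1.le)
    · obtain ⟨n, hn⟩ := (hx α hα).2.2.2.2 β hlt
      have h1 : x α n < β := by rw [h n]; exact (hx β hβ).2.2.2.1 n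
      exact absurd hn (not_lt.2 h1.le)
  have hk := Nat.find_spec hd
  have hmk : ∀ m < Nat.find hd, x α m = x β m := fun m hm =>
    not_not.1 (Nat.find_min hd hm)
  rcases hk.lt_or_gt with h | h
  · exact Or.inl ⟨_, hmk, h⟩
  · exact Or.inr ⟨_, fun m hm => (hmk m hm).symm, h⟩

/-- Pigeonhole: an uncountable set mapped into a countable set has an uncountable fiber. -/
lemma uncountable_fiber {A B : Type*} {s : Set A} {C : Set B}
    (hs : ¬ s.Countable) (hC : C.Countable) (f : A → B) (hf : ∀ a ∈ s, f a ∈ C) :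
    ∃ b, ¬ {a | a ∈ s ∧ f a = b}.Countable := by
  by_contra h
  push_neg at h
  apply hs
  have hsub : s ⊆ ⋃ b ∈ C, {a | a ∈ s ∧ f a = b} := fun a ha =>
    Set.mem_biUnion (hf a ha) ⟨ha, rfl⟩
  exact (hC.biUnion fun b _ => h b).mono hsub

/-- Tuples with entries from a countable set form a countable set. -/
lemma countable_pi {n : ℕ} {s : Set Ordinal} (hs : s.Countable) :
    {f : Fin n → Ordinal | ∀ i, f i ∈ s}.Countable := by
  haveI := hs.to_subtype
  have hsub : {f : Fin n → Ordinal | ∀ i, f i ∈ s} ⊆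
      Set.range (fun F : Fin n → s => fun i => (F i : Ordinal)) := by
    intro f hf
    exact ⟨fun i => ⟨f i, hf i⟩, rfl⟩
  exact (Set.countable_range _).mono hsub

/-- Initial segments below `ω₁` are countable. -/
lemma countable_Iic_of_lt_ω1 {δ : Ordinal} (h : δ < ω1) : (Set.Iic δ).Countable := by
  have hlim : Order.IsSuccLimit ω1 := Cardinal.isSuccLimit_ord Cardinal.aleph0_lt_aleph_one.le
  have h2 : Order.succ δ < ω1 := hlim.succ_lt h
  have hcard : (Order.succ δ).card < Cardinal.aleph 1 := Cardinal.lt_ord.1 h2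
  have hcard' : (Order.succ δ).card ≤ Cardinal.aleph0 := by
    rw [← Cardinal.succ_aleph0] at hcard
    exact Order.lt_succ_iff.1 hcard
  have hmk : (Cardinal.mk (Set.Iio (Order.succ δ))) ≤ Cardinal.aleph0 := by
    rw [Ordinal.mk_Iio_ordinal, ← Cardinal.lift_aleph0.{u_1 + 1, u_1}]
    exact Cardinal.lift_le.2 hcard'
  have hIio : (Set.Iio (Order.succ δ)).Countable :=
    Cardinal.le_aleph0_iff_set_countable.1 hmk
  refine hIio.mono ?_
  intro a ha
  exact Set.mem_Iio.2 (Order.lt_succ_iff.2 (Set.mem_Iic.1 ha))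

/-- A Baumgartner type contains no real type: any subset of `S` which order-embeds into `ℝ`
(with respect to `<lex`) is countable. -/
theorem baumgartner_no_real_type (S : Set Ordinal) (x : Ordinal → ℕ → Ordinal)
    (hS : ¬ S.Countable) (hx : IsLadderOn S x)
    (T : Set Ordinal) (hTS : T ⊆ S)
    (hemb : ∃ g : Ordinal → ℝ, ∀ α ∈ T, ∀ β ∈ T, (LexLt x α β ↔ g α < g β)) :
    T.Countable := by
  classical
  by_contra hT
  obtain ⟨g, hg⟩ := hemb
  set P : ℚ × ℚ → Prop := fun pq => ∃ t ∈ T, (pq.1 : ℝ) < g t ∧ g t < (pq.2 : ℝ) with hPdef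
  have dspec : ∀ pq : ℚ × ℚ, P pq → ∃ t, t ∈ T ∧ (pq.1 : ℝ) < g t ∧ g t < (pq.2 : ℝ) := by
    intro pq h
    obtain ⟨t, ht, h1, h2⟩ := h
    exact ⟨t, ht, h1, h2⟩
  set dfun : ℚ × ℚ → Ordinal :=
    fun pq => if h : P pq then (dspec pq h).choose else 0 with hdfun
  have hdT : ∀ pq, P pq →
      dfun pq ∈ T ∧ (pq.1 : ℝ) < g (dfun pq) ∧ g (dfun pq) < (pq.2 : ℝ) := by
    intro pq h
    simp only [hdfun, dif_pos h]
    exact (dspec pq h).choose_spec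
  have hω1lim : Order.IsSuccLimit ω1 := Cardinal.isSuccLimit_ord Cardinal.aleph0_lt_aleph_one.le
  have hdlt : ∀ pq, dfun pq < ω1 := by
    intro pq
    by_cases h : P pq
    · exact (hx _ (hTS (hdT pq h).1)).1
    · simp only [hdfun, dif_neg h]
      exact hω1lim.pos
  set δ : Ordinal := ⨆ pq : ℚ × ℚ, Order.succ (dfun pq) with hδdef
  have hdδ : ∀ pq, dfun pq < δ := fun pq =>
    lt_of_lt_of_le (Order.lt_succ _) (le_ciSup (Ordinal.bddAbove_range _) pq)
  have hδlt : δ < ω1 := by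
    apply Cardinal.iSup_lt_ord_lift_of_isRegular Cardinal.isRegular_aleph_one
    · refine lt_of_le_of_lt ?_ Cardinal.aleph0_lt_aleph_one
      rw [← Cardinal.lift_aleph0.{u_1, 0}]
      exact Cardinal.lift_le.2 Cardinal.mk_le_aleph0
    · exact fun pq => hω1lim.succ_lt (hdlt pq)
  have hIic : (Set.Iic δ).Countable := countable_Iic_of_lt_ω1 hδlt
  set T' : Set Ordinal := {α | α ∈ T ∧ δ < α} with hT'def
  have hT'unc : ¬ T'.Countable := by
    intro h
    apply hT
    have hsub : T ⊆ Set.Iic δ ∪ T' := by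
      intro a ha
      rcases le_or_gt a δ with hle | hlt
      · exact Or.inl hle
      · exact Or.inr ⟨ha, hlt⟩
    exact (hIic.union h).mono hsub
  have hEx : ∀ α ∈ T', ∃ n, δ < x α n := fun α hα =>
    (hx α (hTS hα.1)).2.2.2.2 δ hα.2
  set nfun : Ordinal → ℕ :=
    fun α => if h : ∃ n, δ < x α n then Nat.find h else 0 with hnfun
  have hnspec : ∀ α ∈ T', δ < x α (nfun α) ∧ ∀ m < nfun α, x α m ≤ δ := by
    intro α hα
    have h := hEx α hα
    constructor
    · simp only [hnfun, dif_pos h]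
      exact Nat.find_spec h
    · intro m hm
      simp only [hnfun, dif_pos h] at hm
      exact not_lt.1 (Nat.find_min h hm)
  obtain ⟨n, hFn⟩ := uncountable_fiber hT'unc
    (Set.countable_univ : (Set.univ : Set ℕ).Countable) nfun (fun a _ => Set.mem_univ _)
  set F1 : Set Ordinal := {a | a ∈ T' ∧ nfun a = n} with hF1def
  obtain ⟨f0, hFunc⟩ := uncountable_fiber hFn (countable_pi (n := n) hIic)
    (fun α => fun i : Fin n => x α i) (by
      intro a ha i
      have := (hnspec a ha.1).2 i
      rw [ha.2] at this
      exact this i.2)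
  set F : Set Ordinal := {a | a ∈ F1 ∧ (fun i : Fin n => x a i) = f0} with hFdef
  have hFT : ∀ a ∈ F, a ∈ T := fun a ha => ha.1.1.1
  have hxeq : ∀ α ∈ F, ∀ β ∈ F, ∀ m < n, x α m = x β m := by
    intro α hα β hβ m hm
    have h1 := congrFun hα.2 ⟨m, hm⟩
    have h2 := congrFun hβ.2 ⟨m, hm⟩
    exact h1.trans h2.symm
  have hgtδ : ∀ α ∈ F, δ < x α n := by
    intro α hα
    have := (hnspec α hα.1.1).1
    rwa [hα.1.2] at this
  have hleδ : ∀ α ∈ F, ∀ m < n, x α m ≤ δ := by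
    intro α hα m hm
    have := (hnspec α hα.1.1).2 m
    rw [hα.1.2] at this
    exact this hm
  have side : ∀ d ∈ T, d < δ → ∀ α ∈ F, ∀ β ∈ F, LexLt x d α → LexLt x d β := by
    intro d hdmem hdlt' α hα β hβ hlex
    obtain ⟨k, hagree, hlt⟩ := hlex
    have hdval : ∀ m, x d m < δ := fun m =>
      lt_trans ((hx d (hTS hdmem)).2.2.2.1 m) hdlt'
    have hkn : k ≤ n := by
      by_contra hcon
      push_neg at hcon
      have heq := hagree n hcon
      have h2 : δ < x α n := hgtδ α hα
      have h3 : x d n < δ := hdval n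
      rw [heq] at h3
      exact absurd h2 (lt_asymm h3)
    rcases lt_or_eq_of_le hkn with hk | hk
    · exact ⟨k, fun m hm => (hagree m hm).trans (hxeq α hα β hβ m (hm.trans hk)),
        by rw [← hxeq α hα β hβ k hk]; exact hlt⟩
    · refine ⟨k, fun m hm => (hagree m hm).trans (hxeq α hα β hβ m (hk ▸ hm)), ?_⟩
      have : δ < x β k := hk ▸ hgtδ β hβ
      exact lt_trans (hdval k) this
  have tri : ∀ a ∈ T, ∀ b ∈ T, a ≠ b → g a < g b ∨ g b < g a := by
    intro a ha b hb hne
    rcases lexlt_total hx (hTS ha) (hTS hb) hne with h | h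
    · exact Or.inl ((hg a ha b hb).1 h)
    · exact Or.inr ((hg b hb a ha).1 h)
  have key : ∀ a ∈ F, ∀ b ∈ F, ∀ c ∈ F, g a < g b → g b < g c → False := by
    intro a ha b hb c hc hab hbc
    obtain ⟨p, hp1, hp2⟩ := exists_rat_btwn hab
    obtain ⟨q, hq1, hq2⟩ := exists_rat_btwn hbc
    have hPpq : P (p, q) := ⟨b, hFT b hb, hp2, hq1⟩
    obtain ⟨hdmem, hd1, hd2⟩ := hdT (p, q) hPpq
    have hdc : LexLt x (dfun (p, q)) c :=
      (hg _ hdmem c (hFT c hc)).2 (lt_trans hd2 hq2)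
    have hda : LexLt x (dfun (p, q)) a :=
      side _ hdmem (hdδ (p, q)) c hc a ha hdc
    have : g (dfun (p, q)) < g a := (hg _ hdmem a (hFT a ha)).1 hda
    exact absurd (lt_trans hp1 hd1) (lt_asymm this)
  have hFinf : F.Infinite := by
    intro hfin
    exact hFunc hfin.countable
  obtain ⟨a, ha⟩ := hFinf.nonempty
  obtain ⟨b, hb'⟩ := (hFinf.diff (Set.finite_singleton a)).nonempty
  obtain ⟨c, hc'⟩ := (hFinf.diff ((Set.finite_singleton a).insert b)).nonempty
  have hb : b ∈ F := hb'.1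
  have hc : c ∈ F := hc'.1
  have hne_ba : b ≠ a := by
    intro h; exact hb'.2 (by simp [h])
  have hne_ca : c ≠ a := by
    intro h; exact hc'.2 (by simp [h])
  have hne_cb : c ≠ b := by
    intro h; exact hc'.2 (by simp [h])
  have haT := hFT a ha
  have hbT := hFT b hb
  have hcT := hFT c hc
  rcases tri a haT b hbT (Ne.symm hne_ba) with h1 | h1
  · rcases tri b hbT c hcT (Ne.symm hne_cb) with h2 | h2
    · exact key a ha b hb c hc h1 h2
    · rcases tri a haT c hcT (Ne.symm hne_ca) with h3 | h3
      · exact key a ha c hc b hb h3 h2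
      · exact key c hc a ha b hb h3 h1
  · rcases tri b hbT c hcT (Ne.symm hne_cb) with h2 | h2
    · rcases tri a haT c hcT (Ne.symm hne_ca) with h3 | h3
      · exact key b hb a ha c hc h1 h3
      · exact key b hb c hc a ha h2 h3
    · exact key c hc b hb a ha h2 h1
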